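/- For every d ≥ 3, the proper polynomial map f_d(x,y) = (x + y + xy, x^{d−1}y) of topological degree d is not equivalent to any semi-separate map (x,y) ↦ (x, Q(x,y)). -/

import Mathlib

open MvPolynomial

/-- A polynomial map `ℂ² → ℂ²`, given by a pair of polynomials. -/
abbrev PolyPair := MvPolynomial (Fin 2) ℂ × MvPolynomial (Fin 2) ℂ

/-- Evaluation of a polynomial pair as a map `ℂ² → ℂ²`. -/
noncomputable def PolyPair.evalMap (f : PolyPair) (p : ℂ × ℂ) : ℂ × ℂ :=
  (MvPolynomial.eval ![p.1, p.2] f.1, MvPolynomial.eval ![p.1, p.2] f.2)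

/-- A polynomial pair is a polynomial automorphism of `ℂ²` if it has a polynomial
inverse. -/
def PolyPair.IsPolyAuto (Φ : PolyPair) : Prop :=
  ∃ Ψ : PolyPair, Φ.evalMap ∘ Ψ.evalMap = id ∧ Ψ.evalMap ∘ Φ.evalMap = id

namespace Stmt8

noncomputable section

abbrev MvP := MvPolynomial (Fin 2) ℂ

def Jd (f g : MvP) : MvP :=
  pderiv 0 f * pderiv 1 g - pderiv 1 f * pderiv 0 g

def yP (φ : MvP) : Polynomial (Polynomial ℂ) :=
  MvPolynomial.aeval ![Polynomial.C Polynomial.X, Polynomial.X] φ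

def lineP (a : ℂ) (φ : MvP) : Polynomial ℂ :=
  (yP φ).map (Polynomial.evalRingHom a)

lemma vec_two (x : Fin 2 → ℂ) : ![x 0, x 1] = x := by
  funext i; fin_cases i <;> rfl

lemma yP_C (c : ℂ) : yP (MvPolynomial.C c) = Polynomial.C (Polynomial.C c) := by
  simp [yP, Polynomial.algebraMap_eq]


lemma yP_add (φ ψ : MvP) : yP (φ + ψ) = yP φ + yP ψ := by unfold yP; exact map_add _ _ _
lemma yP_mul (φ ψ : MvP) : yP (φ * ψ) = yP φ * yP ψ := by unfold yP; exact map_mul _ _ _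
lemma yP_sub (φ ψ : MvP) : yP (φ - ψ) = yP φ - yP ψ := by unfold yP; exact map_sub _ _ _
lemma yP_one : yP 1 = 1 := by unfold yP; exact map_one _
lemma yP_zero : yP 0 = 0 := by unfold yP; exact map_zero _
lemma yP_pow (φ : MvP) (n : ℕ) : yP (φ ^ n) = yP φ ^ n := by unfold yP; exact map_pow _ _ _

lemma lineP_add (a : ℂ) (φ ψ : MvP) : lineP a (φ + ψ) = lineP a φ + lineP a ψ := by
  simp [lineP, yP, map_add]

lemma lineP_mul (a : ℂ) (φ ψ : MvP) : lineP a (φ * ψ) = lineP a φ * lineP a ψ := by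
  simp [lineP, yP, map_mul]

lemma lineP_pow (a : ℂ) (φ : MvP) (n : ℕ) : lineP a (φ ^ n) = lineP a φ ^ n := by
  simp [lineP, yP, map_pow]

lemma lineP_sub (a : ℂ) (φ ψ : MvP) : lineP a (φ - ψ) = lineP a φ - lineP a ψ := by
  simp [lineP, yP, map_sub]

lemma lineP_C (a c : ℂ) : lineP a (MvPolynomial.C c) = Polynomial.C c := by
  simp [lineP, yP_C]

lemma lineP_X0 (a : ℂ) : lineP a (MvPolynomial.X 0) = Polynomial.C a := by
  simp [lineP, yP]

lemma lineP_X1 (a : ℂ) : lineP a (MvPolynomial.X 1) = Polynomial.X := by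
  simp [lineP, yP]

lemma eval_lineP (a b : ℂ) (φ : MvP) :
    (lineP a φ).eval b = MvPolynomial.eval ![a, b] φ := by
  induction φ using MvPolynomial.induction_on with
  | C c => simp [lineP_C]
  | add p q hp hq => simp [lineP_add, hp, hq]
  | mul_X p i hp =>
      fin_cases i <;> simp only [Fin.mk_zero, Fin.mk_one, Fin.isValue]
      · simp [lineP_mul, lineP_X0, hp]
      · simp [lineP_mul, lineP_X1, hp]

lemma yP_eq_zero {φ : MvP} (h : yP φ = 0) : φ = 0 := by
  apply MvPolynomial.funext
  intro x
  rw [← vec_two x, ← eval_lineP, map_zero]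
  simp [lineP, h]

lemma yP_injective {φ ψ : MvP} (h : yP φ = yP ψ) : φ = ψ := by
  have : φ - ψ = 0 := yP_eq_zero (by rw [yP_sub, h, sub_self])
  linear_combination this

lemma mvp_funext {φ ψ : MvP}
    (h : ∀ p : ℂ × ℂ, MvPolynomial.eval ![p.1, p.2] φ = MvPolynomial.eval ![p.1, p.2] ψ) :
    φ = ψ := by
  apply MvPolynomial.funext
  intro x
  have := h (x 0, x 1)
  simpa [vec_two] using this

lemma derivative_yP (φ : MvP) : (yP φ).derivative = yP (pderiv 1 φ) := by
  induction φ using MvPolynomial.induction_on with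
  | C c => simp [yP_C, yP]
  | add p q hp hq =>
      rw [yP_add, Polynomial.derivative_add, hp, hq, map_add (pderiv (1 : Fin 2)), yP_add]
  | mul_X p i hp =>
      fin_cases i <;> simp only [Fin.mk_zero, Fin.mk_one, Fin.isValue]
      · have h0 : pderiv (1 : Fin 2) (MvPolynomial.X (0 : Fin 2) : MvP) = 0 :=
          pderiv_X_of_ne (by decide)
        simp only [yP, map_mul, aeval_X, Matrix.cons_val_zero, pderiv_mul, h0, mul_zero,
          map_add, map_mul, add_zero]
        rw [Polynomial.derivative_mul]
        simp only [Polynomial.derivative_C, mul_zero, add_zero]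
        unfold yP at hp
        rw [hp]
      · have h1 : pderiv (1 : Fin 2) (MvPolynomial.X (1 : Fin 2) : MvP) = 1 := pderiv_X_self 1
        simp only [yP, map_mul, aeval_X, Matrix.cons_val_one, Matrix.head_cons, pderiv_mul, h1,
          mul_one, map_add, map_mul]
        rw [Polynomial.derivative_mul]
        simp only [Matrix.cons_val_zero, Polynomial.derivative_X, mul_one]
        unfold yP at hp
        rw [hp]

lemma derivative_lineP (a : ℂ) (φ : MvP) :
    (lineP a φ).derivative = lineP a (pderiv 1 φ) := by
  rw [lineP, Polynomial.derivative_map, derivative_yP, lineP]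

lemma pderiv_bind₁ (s : Fin 2 → MvP) (i : Fin 2) (φ : MvP) :
    pderiv i (bind₁ s φ) =
      bind₁ s (pderiv 0 φ) * pderiv i (s 0) + bind₁ s (pderiv 1 φ) * pderiv i (s 1) := by
  induction φ using MvPolynomial.induction_on with
  | C c => simp
  | add p q hp hq =>
      simp only [map_add, hp, hq]
      ring
  | mul_X p j hp =>
      rw [map_mul, bind₁_X_right, pderiv_mul, hp]
      fin_cases j <;> simp only [Fin.mk_zero, Fin.mk_one, Fin.isValue]
      · have e0 : pderiv (0:Fin 2) (MvPolynomial.X (0:Fin 2) : MvP) = 1 := pderiv_X_self 0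
        have e1 : pderiv (1:Fin 2) (MvPolynomial.X (0:Fin 2) : MvP) = 0 := pderiv_X_of_ne (by decide)
        simp only [map_mul, pderiv_mul, e0, e1, bind₁_X_right, mul_one, mul_zero, add_zero, map_add]
        ring
      · have e0 : pderiv (0:Fin 2) (MvPolynomial.X (1:Fin 2) : MvP) = 0 := pderiv_X_of_ne (by decide)
        have e1 : pderiv (1:Fin 2) (MvPolynomial.X (1:Fin 2) : MvP) = 1 := pderiv_X_self 1
        simp only [map_mul, pderiv_mul, e0, e1, bind₁_X_right, mul_one, mul_zero, add_zero, map_add]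
        ring

lemma Jd_bind₁ (s : Fin 2 → MvP) (A B : MvP) :
    Jd (bind₁ s A) (bind₁ s B) = bind₁ s (Jd A B) * Jd (s 0) (s 1) := by
  simp only [Jd, pderiv_bind₁, map_sub, map_mul]
  ring

lemma exists_C_of_isUnit {φ : MvP} (h : IsUnit φ) : ∃ c : ℂ, c ≠ 0 ∧ φ = MvPolynomial.C c := by
  obtain ⟨u, rfl⟩ := h
  have h1 : (u : MvP) * ↑u⁻¹ = 1 := u.mul_inv
  have h2 : IsUnit (yP u) := IsUnit.of_mul_eq_one (yP ↑u⁻¹) (by rw [← yP_mul, h1, yP_one])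
  have h3 : (yP u).natDegree = 0 := Polynomial.natDegree_eq_zero_of_isUnit h2
  have h4 : yP u = Polynomial.C ((yP u).coeff 0) := Polynomial.eq_C_of_natDegree_eq_zero h3
  set s : Polynomial ℂ := (yP u).coeff 0 with hs
  have h5 : IsUnit s := Polynomial.isUnit_C.mp (h4 ▸ h2)
  have h6 : s.natDegree = 0 := Polynomial.natDegree_eq_zero_of_isUnit h5
  have h7 : s = Polynomial.C (s.coeff 0) := Polynomial.eq_C_of_natDegree_eq_zero h6
  refine ⟨s.coeff 0, ?_, ?_⟩
  · have : IsUnit (s.coeff 0) := Polynomial.isUnit_C.mp (h7 ▸ h5)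
    exact this.ne_zero
  · apply yP_injective
    rw [yP_C, h4, h7]
    simp [Polynomial.coeff_C]

lemma rootMult_eq_one {T : Polynomial ℂ} {y : ℂ} (hy : T.IsRoot y)
    (hd : T.derivative.eval y ≠ 0) : T.rootMultiplicity y = 1 := by
  have hT : T ≠ 0 := by
    rintro rfl
    simp at hd
  have h1 : 0 < T.rootMultiplicity y := (Polynomial.rootMultiplicity_pos hT).mpr hy
  by_contra hne
  have h2 : 2 ≤ T.rootMultiplicity y := by omega
  have hdvd : (Polynomial.X - Polynomial.C y) ^ 2 ∣ T :=
    dvd_trans (pow_dvd_pow _ h2) (Polynomial.pow_rootMultiplicity_dvd T y)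
  obtain ⟨u, hu⟩ := hdvd
  apply hd
  rw [hu, Polynomial.derivative_mul, Polynomial.derivative_pow]
  simp [Polynomial.eval_mul, Polynomial.eval_add, Polynomial.eval_pow]

lemma natDegree_eq_card_of_simple {T : Polynomial ℂ} (hT : T ≠ 0)
    (hs : ∀ y : ℂ, T.IsRoot y → T.derivative.eval y ≠ 0) :
    T.natDegree = T.roots.toFinset.card := by
  classical
  have hsplit : Polynomial.Splits T := IsAlgClosed.splits T
  have h1 : T.natDegree = Multiset.card T.roots := by
    exact hsplit.natDegree_eq_card_roots
  have h2 : T.roots.Nodup := by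
    rw [Multiset.nodup_iff_count_le_one]
    intro y
    by_cases hy : y ∈ T.roots
    · have hry := (Polynomial.mem_roots hT).mp hy
      rw [Polynomial.count_roots, rootMult_eq_one hry (hs y hry)]
    · rw [Multiset.count_eq_zero_of_notMem hy]
      omega
  rw [h1, Multiset.toFinset_card_eq_card_iff_nodup.mpr h2]

lemma natDegree_derivative_eq' {T : Polynomial ℂ} {n : ℕ} (h : T.natDegree = n + 1) :
    T.derivative.natDegree = n := by
  have hT : T ≠ 0 := by
    rintro rfl
    simp at h
  have hc : T.coeff (n + 1) ≠ 0 := by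
    rw [← h]
    exact Polynomial.leadingCoeff_ne_zero.mpr hT
  have hne : T.derivative.coeff n ≠ 0 := by
    rw [Polynomial.coeff_derivative]
    exact mul_ne_zero hc (Nat.cast_add_one_ne_zero n)
  have hle : T.derivative.natDegree < n + 1 := by
    have := Polynomial.natDegree_derivative_lt (p := T) (by omega)
    omega
  have hge := Polynomial.le_natDegree_of_ne_zero hne
  omega

lemma eval_bind₁' (x : Fin 2 → ℂ) (f : Fin 2 → MvP) (φ : MvP) :
    MvPolynomial.eval x (bind₁ f φ) = MvPolynomial.eval (fun i => MvPolynomial.eval x (f i)) φ := by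
  induction φ using MvPolynomial.induction_on with
  | C c => simp
  | add p q hp hq => simp [map_add, hp, hq]
  | mul_X p i hp => simp [map_mul, bind₁_X_right, hp]

lemma eval_bind_pair (Φ : PolyPair) (ψ : MvP) (p : ℂ × ℂ) :
    MvPolynomial.eval ![p.1, p.2] (bind₁ ![Φ.1, Φ.2] ψ)
      = MvPolynomial.eval ![(Φ.evalMap p).1, (Φ.evalMap p).2] ψ := by
  have hfun : (fun i => MvPolynomial.eval ![p.1, p.2] ((![Φ.1, Φ.2] : Fin 2 → MvP) i))
      = ![(Φ.evalMap p).1, (Φ.evalMap p).2] := by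
    funext i
    fin_cases i <;> rfl
  rw [eval_bind₁', hfun]

lemma bind_inv {Φ Ψ : PolyPair} (h : Ψ.evalMap ∘ Φ.evalMap = id) :
    bind₁ ![Φ.1, Φ.2] Ψ.1 = (MvPolynomial.X 0 : MvP) ∧
      bind₁ ![Φ.1, Φ.2] Ψ.2 = (MvPolynomial.X 1 : MvP) := by
  have hp : ∀ p : ℂ × ℂ, Ψ.evalMap (Φ.evalMap p) = p := fun p => congrFun h p
  constructor
  · apply mvp_funext
    intro p
    rw [eval_bind_pair]
    have h1 := congrArg Prod.fst (hp p)
    simpa [PolyPair.evalMap] using h1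
  · apply mvp_funext
    intro p
    rw [eval_bind_pair]
    have h1 := congrArg Prod.snd (hp p)
    simpa [PolyPair.evalMap] using h1

lemma Jd_X0_X1 : Jd (MvPolynomial.X 0 : MvP) (MvPolynomial.X 1) = 1 := by
  have e0 : pderiv (0:Fin 2) (MvPolynomial.X (0:Fin 2) : MvP) = 1 := pderiv_X_self 0
  have e1 : pderiv (1:Fin 2) (MvPolynomial.X (0:Fin 2) : MvP) = 0 := pderiv_X_of_ne (by decide)
  have e2 : pderiv (0:Fin 2) (MvPolynomial.X (1:Fin 2) : MvP) = 0 := pderiv_X_of_ne (by decide)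
  have e3 : pderiv (1:Fin 2) (MvPolynomial.X (1:Fin 2) : MvP) = 1 := pderiv_X_self 1
  rw [Jd, e0, e1, e2, e3]
  ring

lemma Jd_unit {Φ Ψ : PolyPair} (h : Ψ.evalMap ∘ Φ.evalMap = id) :
    ∃ c : ℂ, c ≠ 0 ∧ Jd Φ.1 Φ.2 = MvPolynomial.C c := by
  obtain ⟨h1, h2⟩ := bind_inv h
  have hmain := Jd_bind₁ ![Φ.1, Φ.2] Ψ.1 Ψ.2
  rw [h1, h2, Jd_X0_X1] at hmain
  have hr0 : (![Φ.1, Φ.2] : Fin 2 → MvP) 0 = Φ.1 := rfl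
  have hr1 : (![Φ.1, Φ.2] : Fin 2 → MvP) 1 = Φ.2 := rfl
  rw [hr0, hr1] at hmain
  exact exists_C_of_isUnit (IsUnit.of_mul_eq_one _
    (by rw [mul_comm]; exact hmain.symm))

def Umv : MvP := MvPolynomial.X 0 + MvPolynomial.X 1 + MvPolynomial.X 0 * MvPolynomial.X 1

def Vmv (e : ℕ) : MvP := MvPolynomial.X 0 ^ (e + 2) * MvPolynomial.X 1

def Lmv (e : ℕ) : MvP := MvPolynomial.X 0 - MvPolynomial.C ((e : ℂ) + 2) * MvPolynomial.X 1
  - MvPolynomial.C ((e : ℂ) + 1) * MvPolynomial.X 0 * MvPolynomial.X 1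

lemma cast_MvP (n : ℕ) : ((n : ℕ) : MvP) = MvPolynomial.C ((n : ℂ)) := by
  exact_mod_cast (map_natCast (MvPolynomial.C : ℂ →+* MvP) n).symm

lemma Jd_UV (e : ℕ) : Jd Umv (Vmv e) = MvPolynomial.X 0 ^ (e + 1) * Lmv e := by
  have e0 : pderiv (0:Fin 2) (MvPolynomial.X (0:Fin 2) : MvP) = 1 := pderiv_X_self 0
  have e1 : pderiv (1:Fin 2) (MvPolynomial.X (0:Fin 2) : MvP) = 0 := pderiv_X_of_ne (by decide)
  have e2 : pderiv (0:Fin 2) (MvPolynomial.X (1:Fin 2) : MvP) = 0 := pderiv_X_of_ne (by decide)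
  have e3 : pderiv (1:Fin 2) (MvPolynomial.X (1:Fin 2) : MvP) = 1 := pderiv_X_self 1
  have hcast : ((e + 2 : ℕ) : MvP) = MvPolynomial.C ((e : ℂ) + 2) := by
    rw [cast_MvP]
    push_cast
    ring
  rw [Jd, Umv, Vmv, Lmv]
  have hexp : e + 2 - 1 = e + 1 := by omega
  simp only [map_add, pderiv_mul, pderiv_pow, e0, e1, e2, e3, hexp]
  rw [hcast]
  simp only [map_add, map_one, map_ofNat]
  ring

theorem stmt_8' (d : ℕ) (hd : 3 ≤ d) :
    ¬ ∃ (Q : MvPolynomial (Fin 2) ℂ) (Φ₁ Φ₂ : PolyPair),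
        Φ₁.IsPolyAuto ∧ Φ₂.IsPolyAuto ∧
        ∀ p : ℂ × ℂ,
          (p.1, MvPolynomial.eval ![p.1, p.2] Q)
            = Φ₂.evalMap ((fun q : ℂ × ℂ =>
                (q.1 + q.2 + q.1 * q.2, q.1 ^ (d - 1) * q.2)) (Φ₁.evalMap p)) := by
  rintro ⟨Q, Φ₁, Φ₂, ⟨Ψ₁, hA1, hA2⟩, ⟨Ψ₂, hB1, hB2⟩, heq0⟩
  obtain ⟨e, rfl⟩ : ∃ e, d = e + 3 := ⟨d - 3, by omega⟩
  have hdm : e + 3 - 1 = e + 2 := by omega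
  rw [hdm] at heq0
  -- the quadratic-degree-d map as a plain function
  set F : ℂ × ℂ → ℂ × ℂ := fun q => (q.1 + q.2 + q.1 * q.2, q.1 ^ (e + 2) * q.2) with hFdef
  have heq : ∀ p : ℂ × ℂ, (p.1, MvPolynomial.eval ![p.1, p.2] Q)
      = Φ₂.evalMap (F (Φ₁.evalMap p)) := heq0
  clear heq0
  -- pointwise inverse identities
  have hφψ : ∀ w, Φ₁.evalMap (Ψ₁.evalMap w) = w := congrFun hA1
  have hψφ : ∀ z, Ψ₁.evalMap (Φ₁.evalMap z) = z := congrFun hA2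
  have hφψ₂ : ∀ w, Φ₂.evalMap (Ψ₂.evalMap w) = w := congrFun hB1
  have hψφ₂ : ∀ z, Ψ₂.evalMap (Φ₂.evalMap z) = z := congrFun hB2
  have hΦ₁inj : Function.Injective Φ₁.evalMap := Function.LeftInverse.injective hψφ
  have hΦ₂inj : Function.Injective Φ₂.evalMap := Function.LeftInverse.injective hψφ₂
  have hΨ₁inj : Function.Injective Ψ₁.evalMap := Function.LeftInverse.injective hφψ
  -- components
  set P₁ : MvP := Φ₁.1 with hP₁def
  set P₂ : MvP := Φ₁.2 with hP₂def
  set r : Fin 2 → MvP := ![Φ₁.1, Φ₁.2] with hrdef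
  set Λ : MvP := bind₁ r (Lmv e) with hΛdef
  set s : Fin 2 → MvP := ![bind₁ r Umv, bind₁ r (Vmv e)] with hsdef
  -- first and second coordinate identities
  have hfst : ∀ p : ℂ × ℂ, (Φ₂.evalMap (F (Φ₁.evalMap p))).1 = p.1 :=
    fun p => (congrArg Prod.fst (heq p)).symm
  have hsnd : ∀ p : ℂ × ℂ, MvPolynomial.eval ![p.1, p.2] Q
      = (Φ₂.evalMap (F (Φ₁.evalMap p))).2 := fun p => congrArg Prod.snd (heq p)
  have hkey : ∀ z : ℂ × ℂ, (Ψ₁.evalMap z).1 = (Φ₂.evalMap (F z)).1 := by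
    intro z
    have h1 := hfst (Ψ₁.evalMap z)
    rw [hφψ z] at h1
    exact h1.symm
  have hQval : ∀ z : ℂ × ℂ,
      MvPolynomial.eval ![(Ψ₁.evalMap z).1, (Ψ₁.evalMap z).2] Q = (Φ₂.evalMap (F z)).2 := by
    intro z
    have h1 := hsnd (Ψ₁.evalMap z)
    rwa [hφψ z] at h1
  -- values of P₁, P₂, Λ at points
  have hP1val : ∀ z : ℂ × ℂ, MvPolynomial.eval ![z.1, z.2] P₁ = (Φ₁.evalMap z).1 := fun z => rfl
  have hP2val : ∀ z : ℂ × ℂ, MvPolynomial.eval ![z.1, z.2] P₂ = (Φ₁.evalMap z).2 := fun z => rfl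
  have hΛval : ∀ z : ℂ × ℂ, MvPolynomial.eval ![z.1, z.2] Λ =
      (Φ₁.evalMap z).1 - ((e : ℂ) + 2) * (Φ₁.evalMap z).2
        - ((e : ℂ) + 1) * (Φ₁.evalMap z).1 * (Φ₁.evalMap z).2 := by
    intro z
    rw [hΛdef, hrdef, eval_bind_pair, Lmv]
    simp
  -- the bind₁ identities for the semi-separate form
  have hsval : ∀ p : ℂ × ℂ, (fun i => MvPolynomial.eval ![p.1, p.2] (s i))
      = ![(F (Φ₁.evalMap p)).1, (F (Φ₁.evalMap p)).2] := by
    intro p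
    funext i
    fin_cases i
    · show MvPolynomial.eval ![p.1, p.2] (bind₁ r Umv) = (F (Φ₁.evalMap p)).1
      rw [hrdef, eval_bind_pair, Umv, hFdef]
      simp
    · show MvPolynomial.eval ![p.1, p.2] (bind₁ r (Vmv e)) = (F (Φ₁.evalMap p)).2
      rw [hrdef, eval_bind_pair, Vmv, hFdef]
      simp
  have hX0 : (MvPolynomial.X 0 : MvP) = bind₁ s Φ₂.1 := by
    apply mvp_funext
    intro p
    rw [eval_bind₁', hsval p]
    have h3 : MvPolynomial.eval ![(F (Φ₁.evalMap p)).1, (F (Φ₁.evalMap p)).2] Φ₂.1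
        = (Φ₂.evalMap (F (Φ₁.evalMap p))).1 := rfl
    rw [h3, hfst p]
    simp
  have hQb : Q = bind₁ s Φ₂.2 := by
    apply mvp_funext
    intro p
    rw [eval_bind₁', hsval p]
    have h3 : MvPolynomial.eval ![(F (Φ₁.evalMap p)).1, (F (Φ₁.evalMap p)).2] Φ₂.2
        = (Φ₂.evalMap (F (Φ₁.evalMap p))).2 := rfl
    rw [h3]
    exact hsnd p
  -- Jacobian constants
  obtain ⟨c₁, hc₁, hJ₁⟩ := Jd_unit hA2
  obtain ⟨c₂, hc₂, hJ₂⟩ := Jd_unit hB2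
  -- the key identity (♦)
  have hQy : pderiv (1 : Fin 2) Q = MvPolynomial.C (c₂ * c₁) * (P₁ ^ (e + 1) * Λ) := by
    have h1 : pderiv (1 : Fin 2) Q = Jd (MvPolynomial.X 0 : MvP) Q := by
      rw [Jd, pderiv_X_self, pderiv_X_of_ne (by decide)]
      ring
    rw [h1, hX0, hQb, Jd_bind₁, hJ₂, bind₁_C_right]
    have h2 : Jd (s 0) (s 1) = bind₁ r (Jd Umv (Vmv e)) * Jd (r 0) (r 1) := by
      have h3 : s 0 = bind₁ r Umv := rfl
      have h4 : s 1 = bind₁ r (Vmv e) := rfl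
      rw [h3, h4, Jd_bind₁]
    have h5 : (r 0 : MvP) = Φ₁.1 := rfl
    have h6 : (r 1 : MvP) = Φ₁.2 := rfl
    rw [h2, h5, h6, hJ₁, Jd_UV, map_mul, map_pow, bind₁_X_right]
    have h7 : (r 0 : MvP) = P₁ := rfl
    rw [h7, ← hΛdef, map_mul]
    ring
  -- evaluation of P₁, P₂, Λ at points Ψ₁(z)
  have hP1ψ : ∀ z : ℂ × ℂ,
      MvPolynomial.eval ![(Ψ₁.evalMap z).1, (Ψ₁.evalMap z).2] P₁ = z.1 := by
    intro z
    have h1 := hP1val (Ψ₁.evalMap z)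
    rw [h1, hφψ z]
  have hP2ψ : ∀ z : ℂ × ℂ,
      MvPolynomial.eval ![(Ψ₁.evalMap z).1, (Ψ₁.evalMap z).2] P₂ = z.2 := by
    intro z
    have h1 := hP2val (Ψ₁.evalMap z)
    rw [h1, hφψ z]
  have hΛψ : ∀ z : ℂ × ℂ,
      MvPolynomial.eval ![(Ψ₁.evalMap z).1, (Ψ₁.evalMap z).2] Λ
        = z.1 - ((e : ℂ) + 2) * z.2 - ((e : ℂ) + 1) * z.1 * z.2 := by
    intro z
    have h1 := hΛval (Ψ₁.evalMap z)
    rw [hφψ z] at h1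
    exact h1
  -- fiber curve evaluations
  have hcurve1 : ∀ (a : ℂ) (z : ℂ × ℂ), (Ψ₁.evalMap z).1 = a →
      (lineP a P₁).eval ((Ψ₁.evalMap z).2) = z.1 := by
    intro a z hz
    rw [eval_lineP, ← hz]
    exact hP1ψ z
  have hcurve2 : ∀ (a : ℂ) (z : ℂ × ℂ), (Ψ₁.evalMap z).1 = a →
      (lineP a P₂).eval ((Ψ₁.evalMap z).2) = z.2 := by
    intro a z hz
    rw [eval_lineP, ← hz]
    exact hP2ψ z
  -- nonvanishing
  have hP1ne : P₁ ≠ 0 := by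
    intro h0
    have h1 := hP1ψ (1, 0)
    rw [h0] at h1
    norm_num at h1
  have hΛne : Λ ≠ 0 := by
    intro h0
    have h1 := hΛψ (1, 0)
    rw [h0] at h1
    norm_num at h1
  have hyP1ne : yP P₁ ≠ 0 := fun h => hP1ne (yP_eq_zero h)
  have hyΛne : yP Λ ≠ 0 := fun h => hΛne (yP_eq_zero h)
  set κ : ℕ := (yP P₁).natDegree with hκdef
  set η : ℕ := (yP Λ).natDegree with hηdef
  -- values of F on special lines
  have hF1 : ∀ x : ℂ, F (x, -1) = (-1, -x ^ (e + 2)) := by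
    intro x
    rw [hFdef]
    simp only [Prod.mk.injEq]
    constructor <;> ring
  have hF2 : F (-1, 0) = (-1, 0) := by
    rw [hFdef]
    simp only [Prod.mk.injEq]
    constructor <;> ring
  -- the restriction of the target first coordinate to the line u = -1
  set aP : Polynomial ℂ := lineP (-1 : ℂ) Φ₂.1 with haPdef
  have haPval : ∀ v : ℂ, aP.eval v = (Φ₂.evalMap (-1, v)).1 := by
    intro v
    rw [haPdef, eval_lineP]
    rfl
  -- α cannot be a constant polynomial
  have hαnc : aP.natDegree ≠ 0 := by
    intro h0
    have haC : aP = Polynomial.C (aP.coeff 0) := Polynomial.eq_C_of_natDegree_eq_zero h0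
    set astar := aP.coeff 0 with hastar
    have hx : ∀ x : ℂ, (Ψ₁.evalMap (x, -1)).1 = astar := by
      intro x
      rw [hkey (x, -1), hF1 x, ← haPval (-x ^ (e + 2)), haC]
      simp
    have h0' : (Ψ₁.evalMap (-1, 0)).1 = astar := by
      rw [hkey (-1, 0), hF2, ← haPval 0, haC]
      simp
    set Ya := lineP astar P₂ with hYadef
    have hYx : ∀ x : ℂ, Ya.eval ((Ψ₁.evalMap (x, -1)).2) = -1 :=
      fun x => hcurve2 astar (x, -1) (hx x)
    have hinj : Function.Injective (fun x : ℂ => (Ψ₁.evalMap (x, -1)).2) := by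
      intro x x' hxx
      have e1 : Ψ₁.evalMap (x, -1) = Ψ₁.evalMap (x', -1) := by
        apply Prod.ext
        · rw [hx x, hx x']
        · exact hxx
      have e2 := hΨ₁inj e1
      exact (Prod.ext_iff.mp e2).1
    have hsub : Set.range (fun x : ℂ => (Ψ₁.evalMap (x, -1)).2)
        ⊆ {t | (Ya + Polynomial.C 1).IsRoot t} := by
      rintro t ⟨x, rfl⟩
      simp only [Set.mem_setOf_eq, Polynomial.IsRoot.def, Polynomial.eval_add,
        Polynomial.eval_C]
      rw [hYx x]
      ring
    have hzero : Ya + Polynomial.C 1 = 0 :=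
      Polynomial.eq_zero_of_infinite_isRoot _
        ((Set.infinite_range_of_injective hinj).mono hsub)
    have h1 : Ya.eval ((Ψ₁.evalMap (-1, 0)).2) = 0 := hcurve2 astar (-1, 0) h0'
    have h2 : Ya.eval ((Ψ₁.evalMap (-1, 0)).2) = -1 := by
      have h3 := congrArg (Polynomial.eval ((Ψ₁.evalMap (-1, 0)).2)) hzero
      rw [Polynomial.eval_add, Polynomial.eval_C, Polynomial.eval_zero] at h3
      linear_combination h3
    rw [h1] at h2
    norm_num at h2
  -- choose a good value v
  classical
  set Lc : Polynomial ℂ := (yP P₁).leadingCoeff * (yP Λ).leadingCoeff with hLcdef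
  have hLcne : Lc ≠ 0 := mul_ne_zero (Polynomial.leadingCoeff_ne_zero.mpr hyP1ne)
    (Polynomial.leadingCoeff_ne_zero.mpr hyΛne)
  set badv : Finset ℂ := {0, (-1 : ℂ) ^ (e + 3)} ∪
    Lc.roots.toFinset.biUnion (fun c => (aP - Polynomial.C c).roots.toFinset) with hbadv
  obtain ⟨v, hv⟩ := Infinite.exists_notMem_finset badv
  have hv0 : v ≠ 0 := by
    intro h
    exact hv (by rw [hbadv, h]; simp)
  have hv1 : v ≠ (-1 : ℂ) ^ (e + 3) := by
    intro h
    exact hv (by rw [hbadv, h]; simp)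
  set a : ℂ := (Φ₂.evalMap (-1, v)).1 with hadef
  set b : ℂ := (Φ₂.evalMap (-1, v)).2 with hbdef
  have hava : aP.eval v = a := haPval v
  have haP_ne : aP - Polynomial.C a ≠ 0 := by
    intro h
    apply hαnc
    rw [sub_eq_zero.mp h]
    exact Polynomial.natDegree_C a
  have hLca : Lc.eval a ≠ 0 := by
    intro hLa
    apply hv
    rw [hbadv]
    apply Finset.mem_union_right
    apply Finset.mem_biUnion.mpr
    refine ⟨a, ?_, ?_⟩
    · rw [Multiset.mem_toFinset]
      exact (Polynomial.mem_roots hLcne).mpr hLa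
    · rw [Multiset.mem_toFinset]
      refine (Polynomial.mem_roots haP_ne).mpr ?_
      show (aP - Polynomial.C a).eval v = 0
      rw [Polynomial.eval_sub, Polynomial.eval_C, hava, sub_self]
  have hlead1 : (yP P₁).leadingCoeff.eval a ≠ 0 := fun h => hLca
    (by rw [hLcdef, Polynomial.eval_mul, h, zero_mul])
  have hlead2 : (yP Λ).leadingCoeff.eval a ≠ 0 := fun h => hLca
    (by rw [hLcdef, Polynomial.eval_mul, h, mul_zero])
  have hκa : (lineP a P₁).natDegree = κ :=
    Polynomial.natDegree_map_of_leadingCoeff_ne_zero _ hlead1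
  have hηa : (lineP a Λ).natDegree = η :=
    Polynomial.natDegree_map_of_leadingCoeff_ne_zero _ hlead2
  have hcoefmap1 : (lineP a P₁).coeff κ = (yP P₁).leadingCoeff.eval a := by
    rw [lineP, Polynomial.coeff_map]
    rfl
  have hlP1ne : lineP a P₁ ≠ 0 := by
    intro h
    apply hlead1
    rw [← hcoefmap1, h, Polynomial.coeff_zero]
  have hcoefmap2 : (lineP a Λ).coeff η = (yP Λ).leadingCoeff.eval a := by
    rw [lineP, Polynomial.coeff_map]
    rfl
  have hlPΛne : lineP a Λ ≠ 0 := by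
    intro h
    apply hlead2
    rw [← hcoefmap2, h, Polynomial.coeff_zero]
  -- the fiber of F over (-1, v)
  set w : ℂ := (-1 : ℂ) ^ (e + 2) * v with hwdef
  have hsq : ((-1 : ℂ) ^ (e + 2)) * ((-1 : ℂ) ^ (e + 2)) = 1 := by
    rw [← pow_add]
    exact Even.neg_one_pow ⟨e + 2, by ring⟩
  have hwne : w ≠ -1 := by
    intro h
    apply hv1
    have h1 : ((-1 : ℂ)) ^ (e + 2) * w = ((-1 : ℂ)) ^ (e + 2) * (-1) := by rw [h]
    rw [hwdef, ← mul_assoc, hsq, one_mul] at h1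
    rw [h1]
    ring
  have hFw : F (-1, w) = (-1, v) := by
    rw [hFdef]
    simp only [Prod.mk.injEq]
    constructor
    · ring
    · show (-1 : ℂ) ^ (e + 2) * w = v
      rw [hwdef, ← mul_assoc, hsq, one_mul]
  have hFx : ∀ x : ℂ, x ^ (e + 2) = -v → F (x, -1) = (-1, v) := by
    intro x hx
    rw [hF1 x, hx, neg_neg]
  set TX : Polynomial ℂ := Polynomial.X ^ (e + 2) - Polynomial.C (-v) with hTXdef
  have hTXne : TX ≠ 0 := Polynomial.X_pow_sub_C_ne_zero (by omega) _
  have hTXroot : ∀ x : ℂ, TX.IsRoot x ↔ x ^ (e + 2) = -v := by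
    intro x
    rw [hTXdef, Polynomial.IsRoot.def, Polynomial.eval_sub, Polynomial.eval_pow,
      Polynomial.eval_X, Polynomial.eval_C, sub_eq_zero]
  have hTXx0 : ∀ x : ℂ, TX.IsRoot x → x ≠ 0 := by
    intro x hx h0
    rw [hTXroot] at hx
    rw [h0, zero_pow (by omega : e + 2 ≠ 0)] at hx
    exact hv0 (by linear_combination hx)
  have hTXxm1 : ∀ x : ℂ, TX.IsRoot x → x ≠ -1 := by
    intro x hx h1
    rw [hTXroot, h1] at hx
    apply hv1
    have h2 : v = -((-1 : ℂ) ^ (e + 2)) := by linear_combination hx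
    rw [h2]
    ring
  have hTXsimple : ∀ x : ℂ, TX.IsRoot x → TX.derivative.eval x ≠ 0 := by
    intro x hx
    have hxne := hTXx0 x hx
    rw [hTXdef, Polynomial.derivative_sub, Polynomial.derivative_C, sub_zero,
      Polynomial.derivative_X_pow]
    simp only [Polynomial.eval_mul, Polynomial.eval_C, Polynomial.eval_pow, Polynomial.eval_X]
    apply mul_ne_zero
    · exact Nat.cast_ne_zero.mpr (by omega)
    · exact pow_ne_zero _ hxne
  have hTXdeg : TX.natDegree = e + 2 := by
    rw [hTXdef]
    exact Polynomial.natDegree_X_pow_sub_C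
  have hTXcard : TX.roots.toFinset.card = e + 2 := by
    rw [← natDegree_eq_card_of_simple hTXne hTXsimple, hTXdeg]
  -- the e+3 points of the fiber of the semi-separate polynomial over (a, b)
  set y₀ : ℂ := (Ψ₁.evalMap (-1, w)).2 with hy₀def
  set ymap : ℂ → ℂ := fun x => (Ψ₁.evalMap (x, -1)).2 with hymapdef
  have hfst0 : (Ψ₁.evalMap (-1, w)).1 = a := by rw [hkey (-1, w), hFw]
  have hfstx : ∀ x : ℂ, x ^ (e + 2) = -v → (Ψ₁.evalMap (x, -1)).1 = a := by
    intro x hx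
    rw [hkey (x, -1), hFx x hx]
  set RT : Finset ℂ := insert y₀ (TX.roots.toFinset.image ymap) with hRTdef
  set T : Polynomial ℂ := lineP a Q - Polynomial.C b with hTdef
  have hTeval : ∀ y : ℂ, T.eval y = MvPolynomial.eval ![a, y] Q - b := by
    intro y
    rw [hTdef, Polynomial.eval_sub, Polynomial.eval_C, eval_lineP]
  have hQab : ∀ z : ℂ × ℂ, F z = (-1, v) → (Ψ₁.evalMap z).1 = a ∧
      MvPolynomial.eval ![a, (Ψ₁.evalMap z).2] Q = b := by
    intro z hz
    have h1 : (Ψ₁.evalMap z).1 = a := by rw [hkey z, hz]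
    refine ⟨h1, ?_⟩
    have h2 := hQval z
    rw [hz] at h2
    rw [← h1]
    exact h2
  have hTroot_of : ∀ y : ℂ, y ∈ RT → T.IsRoot y := by
    intro y hy
    rw [hRTdef, Finset.mem_insert] at hy
    rcases hy with hy | hy
    · obtain ⟨h1, h2⟩ := hQab (-1, w) hFw
      rw [Polynomial.IsRoot.def, hTeval, hy, hy₀def, h2, sub_self]
    · rw [Finset.mem_image] at hy
      obtain ⟨x, hx, rfl⟩ := hy
      rw [Multiset.mem_toFinset, Polynomial.mem_roots hTXne, hTXroot] at hx
      obtain ⟨h1, h2⟩ := hQab (x, -1) (hFx x hx)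
      rw [Polynomial.IsRoot.def, hTeval, hymapdef, h2, sub_self]
  have hTroot_to : ∀ y : ℂ, T.IsRoot y → y ∈ RT := by
    intro y hy
    rw [Polynomial.IsRoot.def, hTeval, sub_eq_zero] at hy
    have h1 : Φ₂.evalMap (F (Φ₁.evalMap (a, y))) = Φ₂.evalMap (-1, v) := by
      rw [← heq (a, y)]
      show ((a : ℂ), MvPolynomial.eval ![a, y] Q) = (a, b)
      rw [hy]
    have h2 : F (Φ₁.evalMap (a, y)) = (-1, v) := hΦ₂inj h1
    set z := Φ₁.evalMap (a, y) with hzdef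
    have h3 : (1 + z.1) * (1 + z.2) = 0 := by
      have h4 := congrArg Prod.fst h2
      rw [hFdef] at h4
      simp only at h4
      linear_combination h4
    have h5 := congrArg Prod.snd h2
    rw [hFdef] at h5
    simp only at h5
    have hyz : (a, y) = Ψ₁.evalMap z := by rw [hzdef, hψφ]
    rcases mul_eq_zero.mp h3 with h6 | h6
    · have hz1 : z.1 = -1 := by linear_combination h6
      have hz2 : z.2 = w := by
        rw [hz1] at h5
        rw [hwdef, ← h5, ← mul_assoc, hsq, one_mul]
      have hz' : z = (-1, w) := Prod.ext hz1 hz2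
      rw [hRTdef, Finset.mem_insert]
      left
      rw [hy₀def, ← hz']
      exact congrArg Prod.snd hyz
    · have hz2 : z.2 = -1 := by linear_combination h6
      have hz1 : z.1 ^ (e + 2) = -v := by
        rw [hz2] at h5
        linear_combination -h5
      have hz' : z = (z.1, -1) := Prod.ext rfl hz2
      rw [hRTdef, Finset.mem_insert]
      right
      rw [Finset.mem_image]
      refine ⟨z.1, ?_, ?_⟩
      · rw [Multiset.mem_toFinset, Polynomial.mem_roots hTXne, hTXroot]
        exact hz1
      · rw [hymapdef]
        show (Ψ₁.evalMap (z.1, -1)).2 = y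
        rw [← hz']
        exact (congrArg Prod.snd hyz).symm
  have hy₀notmem : y₀ ∉ TX.roots.toFinset.image ymap := by
    intro hmem
    rw [Finset.mem_image] at hmem
    obtain ⟨x, hx, hxy⟩ := hmem
    rw [Multiset.mem_toFinset, Polynomial.mem_roots hTXne] at hx
    have h1 : Ψ₁.evalMap (x, -1) = Ψ₁.evalMap (-1, w) := by
      apply Prod.ext
      · rw [hfstx x ((hTXroot x).mp hx), hfst0]
      · exact hxy
    have h2 := hΨ₁inj h1
    exact hwne (congrArg Prod.snd h2).symm
  have hinjOn : Set.InjOn ymap (TX.roots.toFinset : Set ℂ) := by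
    intro x hx x' hx' hxy
    rw [Finset.mem_coe, Multiset.mem_toFinset, Polynomial.mem_roots hTXne] at hx hx'
    have h1 : Ψ₁.evalMap (x, -1) = Ψ₁.evalMap (x', -1) := by
      apply Prod.ext
      · rw [hfstx x ((hTXroot x).mp hx), hfstx x' ((hTXroot x').mp hx')]
      · exact hxy
    have h2 := hΨ₁inj h1
    exact congrArg Prod.fst h2
  have hRTcard : RT.card = e + 3 := by
    rw [hRTdef, Finset.card_insert_of_notMem hy₀notmem,
      Finset.card_image_of_injOn hinjOn, hTXcard]
  have hTderiv : T.derivative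
      = Polynomial.C (c₂ * c₁) * ((lineP a P₁) ^ (e + 1) * lineP a Λ) := by
    rw [hTdef, Polynomial.derivative_sub, Polynomial.derivative_C, sub_zero,
      derivative_lineP, hQy, lineP_mul, lineP_C, lineP_mul, lineP_pow]
  have hTsimple : ∀ y : ℂ, T.IsRoot y → T.derivative.eval y ≠ 0 := by
    intro y hy
    have hmem := hTroot_to y hy
    rw [hTderiv]
    simp only [Polynomial.eval_mul, Polynomial.eval_C, Polynomial.eval_pow]
    rw [eval_lineP, eval_lineP]
    rw [hRTdef, Finset.mem_insert] at hmem
    rcases hmem with hmem | hmem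
    · have hz : (a, y) = Ψ₁.evalMap (-1, w) := by
        apply Prod.ext
        · exact hfst0.symm
        · rw [hmem, hy₀def]
      have e1 : MvPolynomial.eval ![a, y] P₁ = ((-1 : ℂ), w).1 := by
        have h7 := hP1ψ (-1, w)
        rw [← hz] at h7
        exact h7
      have e2 : MvPolynomial.eval ![a, y] Λ
          = ((-1 : ℂ), w).1 - ((e : ℂ) + 2) * ((-1 : ℂ), w).2
            - ((e : ℂ) + 1) * ((-1 : ℂ), w).1 * ((-1 : ℂ), w).2 := by
        have h7 := hΛψ (-1, w)
        rw [← hz] at h7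
        exact h7
      rw [e1, e2]
      show c₂ * c₁ * ((-1 : ℂ) ^ (e + 1) * ((-1 : ℂ) - ((e : ℂ) + 2) * w
        - ((e : ℂ) + 1) * (-1) * w)) ≠ 0
      apply mul_ne_zero (mul_ne_zero hc₂ hc₁)
      apply mul_ne_zero (pow_ne_zero _ (by norm_num : (-1 : ℂ) ≠ 0))
      intro hcon
      apply hwne
      linear_combination -hcon
    · rw [Finset.mem_image] at hmem
      obtain ⟨x, hx, hxy⟩ := hmem
      rw [Multiset.mem_toFinset, Polynomial.mem_roots hTXne] at hx
      have hz : (a, y) = Ψ₁.evalMap (x, -1) := by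
        apply Prod.ext
        · exact (hfstx x ((hTXroot x).mp hx)).symm
        · rw [← hxy, hymapdef]
      have e1 : MvPolynomial.eval ![a, y] P₁ = ((x : ℂ), (-1 : ℂ)).1 := by
        have h7 := hP1ψ (x, -1)
        rw [← hz] at h7
        exact h7
      have e2 : MvPolynomial.eval ![a, y] Λ
          = ((x : ℂ), (-1 : ℂ)).1 - ((e : ℂ) + 2) * ((x : ℂ), (-1 : ℂ)).2
            - ((e : ℂ) + 1) * ((x : ℂ), (-1 : ℂ)).1 * ((x : ℂ), (-1 : ℂ)).2 := by
        have h7 := hΛψ (x, -1)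
        rw [← hz] at h7
        exact h7
      rw [e1, e2]
      show c₂ * c₁ * (x ^ (e + 1) * (x - ((e : ℂ) + 2) * (-1)
        - ((e : ℂ) + 1) * x * (-1))) ≠ 0
      apply mul_ne_zero (mul_ne_zero hc₂ hc₁)
      apply mul_ne_zero (pow_ne_zero _ (hTXx0 x hx))
      intro hcon
      apply hTXxm1 x hx
      have h8 : ((e : ℂ) + 2) * (x + 1) = 0 := by linear_combination hcon
      rcases mul_eq_zero.mp h8 with h9 | h9
      · exact absurd h9 (by exact_mod_cast (show ((e : ℤ) + 2) ≠ 0 by omega))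
      · linear_combination h9
  have hTne : T ≠ 0 := by
    intro h0
    obtain ⟨y', hy'⟩ := Infinite.exists_notMem_finset RT
    apply hy'
    apply hTroot_to y'
    rw [h0]
    exact Polynomial.IsRoot.def.mpr (by simp)
  have hTdeg : T.natDegree = e + 3 := by
    rw [natDegree_eq_card_of_simple hTne hTsimple]
    have hfs : T.roots.toFinset = RT := by
      ext y
      rw [Multiset.mem_toFinset, Polynomial.mem_roots hTne]
      exact ⟨hTroot_to y, hTroot_of y⟩
    rw [hfs, hRTcard]
  have hTd1 : T.derivative.natDegree = e + 2 := natDegree_derivative_eq' hTdeg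
  have hE1 : (e + 1) * κ + η = e + 2 := by
    rw [hTderiv, Polynomial.natDegree_C_mul (mul_ne_zero hc₂ hc₁),
      Polynomial.natDegree_mul (pow_ne_zero _ hlP1ne) hlPΛne,
      Polynomial.natDegree_pow, hκa, hηa] at hTd1
    omega
  -- basic nonzero complex constants
  have he1C : ((e : ℂ) + 1) ≠ 0 := by exact_mod_cast (show ((e : ℤ) + 1) ≠ 0 by omega)
  have he2C : ((e : ℂ) + 2) ≠ 0 := by exact_mod_cast (show ((e : ℤ) + 2) ≠ 0 by omega)
  -- expansion of Λ
  have hr0' : r 0 = P₁ := rfl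
  have hr1' : r 1 = P₂ := rfl
  have hΛexp : Λ = P₁ - MvPolynomial.C ((e : ℂ) + 2) * P₂
      - MvPolynomial.C ((e : ℂ) + 1) * P₁ * P₂ := by
    rw [hΛdef, Lmv]
    simp only [map_sub, map_mul, bind₁_X_right, bind₁_C_right]
    rw [hr0', hr1']
  have hyΛexp : yP Λ = yP P₁ - Polynomial.C (Polynomial.C ((e : ℂ) + 2)) * yP P₂
      - Polynomial.C (Polynomial.C ((e : ℂ) + 1)) * yP P₁ * yP P₂ := by
    rw [hΛexp, yP_sub, yP_sub, yP_mul, yP_mul, yP_mul, yP_C, yP_C]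
  have hcases : η = 0 ∨ (κ = 0 ∧ η = e + 2) ∨ (κ = 1 ∧ η = 1) := by
    by_cases h0 : κ = 0
    · right; left
      refine ⟨h0, ?_⟩
      have h := hE1
      rw [h0, Nat.mul_zero, Nat.zero_add] at h
      exact h
    by_cases h1 : κ = 1
    · right; right
      refine ⟨h1, ?_⟩
      have h := hE1
      rw [h1, Nat.mul_one] at h
      omega
    · left
      have h2 : 2 ≤ κ := by omega
      have h4 : 2 * e + 2 ≤ (e + 1) * κ := by
        calc 2 * e + 2 = (e + 1) * 2 := by ring
        _ ≤ (e + 1) * κ := Nat.mul_le_mul_left _ h2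
      have h5 := hE1
      generalize hgen : (e + 1) * κ = t at h4 h5
      omega
  rcases hcases with hη0 | ⟨hκ0, hη2⟩ | ⟨hκ1, hη1⟩
  -- CASE 1 : η = 0
  · have hlam : yP Λ = Polynomial.C ((yP Λ).coeff 0) :=
      Polynomial.eq_C_of_natDegree_eq_zero hη0
    set lam : Polynomial ℂ := (yP Λ).coeff 0 with hlamdef
    have hΛfun : ∀ z : ℂ × ℂ, MvPolynomial.eval ![z.1, z.2] Λ = lam.eval z.1 := by
      intro z
      rw [← eval_lineP, lineP, hlam, Polynomial.map_C, Polynomial.eval_C]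
      rfl
    have hval1 : lam.eval ((Ψ₁.evalMap (1, 0)).1) = 1 := by
      have h1 := hΛψ (1, 0)
      rw [hΛfun (Ψ₁.evalMap (1, 0))] at h1
      rw [h1]
      norm_num
    have hval0 : lam.eval ((Ψ₁.evalMap (0, 0)).1) = 0 := by
      have h1 := hΛψ (0, 0)
      rw [hΛfun (Ψ₁.evalMap (0, 0))] at h1
      rw [h1]
      norm_num
    have hlamnc : lam.natDegree ≠ 0 := by
      intro h0
      have hC := Polynomial.eq_C_of_natDegree_eq_zero h0
      rw [hC, Polynomial.eval_C] at hval1 hval0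
      rw [hval0] at hval1
      norm_num at hval1
    obtain ⟨x₁, hx₁⟩ := IsAlgClosed.exists_root (p := lam)
      ((Polynomial.natDegree_pos_iff_degree_pos.mp (Nat.pos_of_ne_zero hlamnc)).ne')
    have hx₁0 : lam.eval x₁ = 0 := hx₁
    set Xc : Polynomial ℂ := lineP x₁ P₁ with hXcdef
    set Yc : Polynomial ℂ := lineP x₁ P₂ with hYcdef
    have hlineΛ : lineP x₁ Λ = 0 := by
      rw [lineP, hlam, Polynomial.map_C]
      have : (Polynomial.evalRingHom x₁) lam = 0 := hx₁0
      rw [this, Polynomial.C_0]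
    have hconic : Xc - Polynomial.C ((e : ℂ) + 2) * Yc
        - Polynomial.C ((e : ℂ) + 1) * Xc * Yc = 0 := by
      rw [← hlineΛ]
      conv_rhs => rw [hΛexp]
      rw [lineP_sub, lineP_sub, lineP_mul, lineP_mul, lineP_mul, lineP_C, lineP_C]
    set Wc : Polynomial ℂ := Polynomial.C ((e : ℂ) + 2) + Polynomial.C ((e : ℂ) + 1) * Xc
      with hWcdef
    have hWid : Wc * (1 - Polynomial.C ((e : ℂ) + 1) * Yc) = Polynomial.C ((e : ℂ) + 2) := by
      rw [hWcdef]
      linear_combination (Polynomial.C ((e : ℂ) + 1)) * hconic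
    have hCne : (Polynomial.C ((e : ℂ) + 2) : Polynomial ℂ) ≠ 0 :=
      Polynomial.C_ne_zero.mpr he2C
    have hWne : Wc ≠ 0 := fun h => hCne (by rw [← hWid, h, zero_mul])
    have hfacne : (1 - Polynomial.C ((e : ℂ) + 1) * Yc) ≠ 0 :=
      fun h => hCne (by rw [← hWid, h, mul_zero])
    have hWdeg : Wc.natDegree = 0 := by
      have h1 := Polynomial.natDegree_mul hWne hfacne
      rw [hWid, Polynomial.natDegree_C] at h1
      omega
    have hXc : Xc = Polynomial.C (Xc.coeff 0) := by
      have h2 : Polynomial.C ((e : ℂ) + 1) * Xc = Wc - Polynomial.C ((e : ℂ) + 2) := by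
        rw [hWcdef]
        ring
      have h3 : (Polynomial.C ((e : ℂ) + 1) * Xc).natDegree = 0 := by
        rw [h2]
        have h4 := Polynomial.natDegree_sub_C (p := Wc) (a := (e : ℂ) + 2)
        rw [h4, hWdeg]
      rw [Polynomial.natDegree_C_mul he1C] at h3
      exact Polynomial.eq_C_of_natDegree_eq_zero h3
    have hYc : Yc = Polynomial.C (Yc.coeff 0) := by
      have hw₀ : Wc = Polynomial.C (Wc.coeff 0) := Polynomial.eq_C_of_natDegree_eq_zero hWdeg
      have hw₀ne : Wc.coeff 0 ≠ 0 := fun h => hWne (by rw [hw₀, h, Polynomial.C_0])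
      have h4 : Polynomial.C (Wc.coeff 0 * ((e : ℂ) + 1)) * Yc
          = Polynomial.C (Wc.coeff 0 - ((e : ℂ) + 2)) := by
        rw [hw₀] at hWid
        rw [Polynomial.C_mul, Polynomial.C_sub]
        linear_combination -hWid
      have h5 : (Polynomial.C (Wc.coeff 0 * ((e : ℂ) + 1)) * Yc).natDegree = 0 := by
        rw [h4, Polynomial.natDegree_C]
      rw [Polynomial.natDegree_C_mul (mul_ne_zero hw₀ne he1C)] at h5
      exact Polynomial.eq_C_of_natDegree_eq_zero h5
    have hpt : Φ₁.evalMap (x₁, 0) = Φ₁.evalMap (x₁, 1) := by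
      apply Prod.ext
      · show MvPolynomial.eval ![x₁, (0 : ℂ)] P₁ = MvPolynomial.eval ![x₁, (1 : ℂ)] P₁
        rw [← eval_lineP, ← eval_lineP, ← hXcdef, hXc, Polynomial.eval_C, Polynomial.eval_C]
      · show MvPolynomial.eval ![x₁, (0 : ℂ)] P₂ = MvPolynomial.eval ![x₁, (1 : ℂ)] P₂
        rw [← eval_lineP, ← eval_lineP, ← hYcdef, hYc, Polynomial.eval_C, Polynomial.eval_C]
    have hcontra := hΦ₁inj hpt
    have : (0 : ℂ) = 1 := congrArg Prod.snd hcontra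
    norm_num at this
  -- CASE 2 : κ = 0
  · have hηne : η ≠ 0 := by omega
    have hpc : yP P₁ = Polynomial.C ((yP P₁).coeff 0) :=
      Polynomial.eq_C_of_natDegree_eq_zero hκ0
    set pc : Polynomial ℂ := (yP P₁).coeff 0 with hpcdef
    have hP1fun : ∀ z : ℂ × ℂ, MvPolynomial.eval ![z.1, z.2] P₁ = pc.eval z.1 := by
      intro z
      rw [← eval_lineP, lineP, hpc, Polynomial.map_C, Polynomial.eval_C]
      rfl
    have hdP₁ : pderiv (1 : Fin 2) P₁ = 0 := by
      apply yP_eq_zero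
      rw [← derivative_yP, hpc, Polynomial.derivative_C]
    rw [← hP₁def, ← hP₂def] at hJ₁
    have hJd1 : pderiv (0 : Fin 2) P₁ * pderiv (1 : Fin 2) P₂ = MvPolynomial.C c₁ := by
      rw [Jd, hdP₁, zero_mul, sub_zero] at hJ₁
      exact hJ₁
    have hunit : IsUnit (pderiv (1 : Fin 2) P₂) := by
      have h2 : IsUnit (MvPolynomial.C c₁ : MvP) :=
        IsUnit.of_mul_eq_one (MvPolynomial.C c₁⁻¹)
          (by rw [← map_mul, mul_inv_cancel₀ hc₁, map_one])
      rw [← hJd1] at h2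
      exact isUnit_of_mul_isUnit_right h2
    obtain ⟨c₃, hc₃, hP2y⟩ := exists_C_of_isUnit hunit
    have hdyP2 : (yP P₂).derivative = Polynomial.C (Polynomial.C c₃) := by
      rw [derivative_yP, hP2y, yP_C]
    set ρ : ℕ := (yP P₂).natDegree with hρdef
    set Wx : Polynomial ℂ := Polynomial.C ((e : ℂ) + 2) + Polynomial.C ((e : ℂ) + 1) * pc
      with hWxdef
    have hyΛ2 : yP Λ = Polynomial.C pc - Polynomial.C Wx * yP P₂ := by
      rw [hyΛexp, hpc, hWxdef]
      simp only [map_add, map_mul]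
      ring
    have hval1 : pc.eval ((Ψ₁.evalMap (1, 0)).1) = 1 := by
      have h1 := hP1ψ (1, 0)
      rw [hP1fun (Ψ₁.evalMap (1, 0))] at h1
      exact h1
    have hWxne : Wx ≠ 0 := by
      intro h0
      have h1 := congrArg (Polynomial.eval ((Ψ₁.evalMap (1, 0)).1)) h0
      rw [hWxdef] at h1
      simp only [Polynomial.eval_add, Polynomial.eval_mul, Polynomial.eval_C,
        Polynomial.eval_zero] at h1
      rw [hval1] at h1
      have h2 : ((e : ℂ) * 2 + 3) = 0 := by linear_combination h1
      have h3 : ((e : ℂ) * 2 + 3) ≠ 0 := by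
        exact_mod_cast (show ((e : ℤ) * 2 + 3) ≠ 0 by omega)
      exact h3 h2
    have hyP2ne : yP P₂ ≠ 0 := by
      intro h0
      apply hηne
      rw [hηdef, hyΛ2, h0, mul_zero, sub_zero, Polynomial.natDegree_C]
    have hCWxne : (Polynomial.C Wx : Polynomial (Polynomial ℂ)) ≠ 0 :=
      Polynomial.C_ne_zero.mpr hWxne
    have hprod : (Polynomial.C Wx * yP P₂).natDegree = ρ := by
      rw [Polynomial.natDegree_mul hCWxne hyP2ne, Polynomial.natDegree_C]
      omega
    have hρval : ρ = e + 2 := by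
      rcases Nat.eq_zero_or_pos ρ with h0 | hpos
      · exfalso
        apply hηne
        rw [hηdef, hyΛ2]
        have h1 : (Polynomial.C pc - Polynomial.C Wx * yP P₂).natDegree ≤ 0 := by
          refine le_trans (Polynomial.natDegree_sub_le _ _) ?_
          simp [Polynomial.natDegree_C, hprod, h0]
        omega
      · have h1 : η = ρ := by
          rw [hηdef, hyΛ2]
          have h2 : (Polynomial.C pc).natDegree < (Polynomial.C Wx * yP P₂).natDegree := by
            rw [hprod, Polynomial.natDegree_C]
            omega
          rw [Polynomial.natDegree_sub_eq_right_of_natDegree_lt h2, hprod]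
        omega
    have hlead : (yP P₂).coeff (e + 2) ≠ 0 := by
      have h1 : (yP P₂).natDegree = e + 2 := by rw [← hρdef, hρval]
      rw [← h1]
      exact Polynomial.leadingCoeff_ne_zero.mpr hyP2ne
    have hcontra := congrArg (fun q => Polynomial.coeff q (e + 1)) hdyP2
    simp only [Polynomial.coeff_derivative, Polynomial.coeff_C] at hcontra
    rw [if_neg (by omega : ¬(e + 1 = 0))] at hcontra
    rcases mul_eq_zero.mp hcontra with h9 | h9
    · exact hlead h9
    · have h10 : ((e + 1 + 1 : ℕ) : Polynomial ℂ) ≠ 0 :=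
        Nat.cast_ne_zero.mpr (by omega)
      apply h10
      push_cast at h9 ⊢
      linear_combination h9
  -- CASE 3 : κ = 1
  · have hnd1 : (yP P₁).natDegree = 1 := by rw [← hκdef, hκ1]
    set A₁ : Polynomial ℂ := (yP P₁).coeff 1 with hA₁def
    set A₀ : Polynomial ℂ := (yP P₁).coeff 0 with hA₀def
    have hdec : yP P₁ = Polynomial.C A₁ * Polynomial.X + Polynomial.C A₀ :=
      Polynomial.eq_X_add_C_of_natDegree_le_one (by omega)
    have hA₁ne : A₁ ≠ 0 := by
      rw [hA₁def, ← hnd1]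
      exact Polynomial.leadingCoeff_ne_zero.mpr hyP1ne
    set M : Polynomial (Polynomial ℂ) := Polynomial.C (Polynomial.C ((e : ℂ) + 2))
        + Polynomial.C (Polynomial.C ((e : ℂ) + 1)) * yP P₁ with hMdef
    have hM : yP Λ = yP P₁ - M * yP P₂ := by
      rw [hyΛexp, hMdef]
      ring
    have hMeq : M = Polynomial.C (Polynomial.C ((e : ℂ) + 1) * A₁) * Polynomial.X
        + Polynomial.C (Polynomial.C ((e : ℂ) + 2) + Polynomial.C ((e : ℂ) + 1) * A₀) := by
      rw [hMdef, hdec]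
      simp only [map_add, map_mul]
      ring
    have hCe1 : (Polynomial.C ((e : ℂ) + 1) : Polynomial ℂ) ≠ 0 :=
      Polynomial.C_ne_zero.mpr he1C
    have hMdeg : M.natDegree = 1 := by
      rw [hMeq]
      exact Polynomial.natDegree_linear (mul_ne_zero hCe1 hA₁ne)
    have hMne : M ≠ 0 := by
      intro h0
      rw [h0, Polynomial.natDegree_zero] at hMdeg
      omega
    have hyP2ne : yP P₂ ≠ 0 := by
      intro h0
      have h1 := hP2ψ (0, 1)
      rw [yP_eq_zero h0] at h1
      norm_num at h1
    set ρ : ℕ := (yP P₂).natDegree with hρdef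
    have hρ0 : ρ = 0 := by
      by_contra hρne
      have h1 : (M * yP P₂).natDegree = 1 + ρ := by
        rw [Polynomial.natDegree_mul hMne hyP2ne, hMdeg]
      have h2 : η = 1 + ρ := by
        rw [hηdef, hM]
        have h3 : (yP P₁).natDegree < (M * yP P₂).natDegree := by
          rw [h1, hnd1]
          omega
        rw [Polynomial.natDegree_sub_eq_right_of_natDegree_lt h3, h1]
      omega
    have hBdec : yP P₂ = Polynomial.C ((yP P₂).coeff 0) :=
      Polynomial.eq_C_of_natDegree_eq_zero hρ0
    set B : Polynomial ℂ := (yP P₂).coeff 0 with hBdef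
    have hP2fun : ∀ z : ℂ × ℂ, MvPolynomial.eval ![z.1, z.2] P₂ = B.eval z.1 := by
      intro z
      rw [← eval_lineP, lineP, hBdec, Polynomial.map_C, Polynomial.eval_C]
      rfl
    have hθ : (Ψ₁.evalMap (0, 1)).1 = (Ψ₁.evalMap (1, 0)).1 := by
      rw [hkey (0, 1), hkey (1, 0)]
      have hF01 : F ((0 : ℂ), (1 : ℂ)) = (1, 0) := by
        rw [hFdef]
        simp only [Prod.mk.injEq]
        constructor
        · ring
        · rw [zero_pow (by omega : e + 2 ≠ 0)]
          ring
      have hF10 : F ((1 : ℂ), (0 : ℂ)) = (1, 0) := by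
        rw [hFdef]
        simp only [Prod.mk.injEq]
        constructor <;> ring
      rw [hF01, hF10]
    have hB1 : B.eval ((Ψ₁.evalMap (0, 1)).1) = 1 := by
      have h1 := hP2ψ (0, 1)
      rw [hP2fun (Ψ₁.evalMap (0, 1))] at h1
      exact h1
    have hB0 : B.eval ((Ψ₁.evalMap (1, 0)).1) = 0 := by
      have h1 := hP2ψ (1, 0)
      rw [hP2fun (Ψ₁.evalMap (1, 0))] at h1
      exact h1
    rw [hθ, hB0] at hB1
    norm_num at hB1

end

end Stmt8

/-- For every `d ≥ 3`, the proper polynomial map `f_d(x,y) = (x + y + xy, x^{d-1}y)`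
is not equivalent to any semi-separate map `(x,y) ↦ (x, Q(x,y))`. -/
theorem stmt_8 (d : ℕ) (hd : 3 ≤ d) :
    ¬ ∃ (Q : MvPolynomial (Fin 2) ℂ) (Φ₁ Φ₂ : PolyPair),
        Φ₁.IsPolyAuto ∧ Φ₂.IsPolyAuto ∧
        ∀ p : ℂ × ℂ,
          (p.1, MvPolynomial.eval ![p.1, p.2] Q)
            = Φ₂.evalMap ((fun q : ℂ × ℂ =>
                (q.1 + q.2 + q.1 * q.2, q.1 ^ (d - 1) * q.2)) (Φ₁.evalMap p)) := by
  exact Stmt8.stmt_8' d hd
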